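/- Let k be a positive integer and let x > 0 be real. Then |J_k(x)| ≤ e^{ex/2 − k}, where J_k is the Bessel function of the first kind of order k and e is Euler's number. -/

import Mathlib

open MeasureTheory Real Finset

/-- The Bessel function of the first kind of nonnegative integer order `n`,
defined by its everywhere-convergent power series. -/
noncomputable def besselJNat (n : ℕ) (x : ℝ) : ℝ :=
  ∑' q : ℕ, (-1 : ℝ) ^ q * (x / 2) ^ (2 * q + n) /
    ((q.factorial : ℝ) * ((q + n).factorial : ℝ))

/-- The Bessel function of the first kind of integer order. -/
noncomputable def besselJ (n : ℤ) (x : ℝ) : ℝ :=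
  if 0 ≤ n then besselJNat n.toNat x else (-1 : ℝ) ^ n * besselJNat (-n).toNat x

lemma bessel_term_abs (n q : ℕ) (x : ℝ) :
    |(-1:ℝ)^q * (x/2)^(2*q+n) / ((q.factorial : ℝ) * ((q+n).factorial : ℝ))|
      ≤ |x/2|^n * (((x/2)^2)^q / q.factorial) := by
  have h1 : ((q.factorial : ℝ)) ≤ ((q.factorial : ℝ) * ((q+n).factorial : ℝ)) := by
    nlinarith [Nat.one_le_cast (α := ℝ) |>.mpr (q+n).factorial_pos,
      Nat.cast_pos (α := ℝ) |>.mpr q.factorial_pos]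
  have h2 : (0:ℝ) < q.factorial := Nat.cast_pos.mpr q.factorial_pos
  rw [abs_div, abs_mul, abs_pow, abs_pow, abs_neg, abs_one, one_pow, one_mul]
  have hnum : |x/2| ^ (2*q+n) = |x/2|^n * ((x/2)^2)^q := by
    rw [pow_add, mul_comm, pow_mul, sq_abs]
  rw [hnum]
  have habs : |(q.factorial : ℝ) * ((q+n).factorial : ℝ)| = (q.factorial : ℝ) * ((q+n).factorial : ℝ) :=
    abs_of_nonneg (by positivity)
  rw [habs, mul_div_assoc]
  gcongr

lemma bessel_summable (n : ℕ) (x : ℝ) :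
    Summable (fun q : ℕ => (-1:ℝ)^q * (x/2)^(2*q+n) / ((q.factorial : ℝ) * ((q+n).factorial : ℝ))) := by
  apply Summable.of_norm_bounded (((Real.summable_pow_div_factorial ((x/2)^2))).mul_left (|x/2|^n))
  intro q
  rw [Real.norm_eq_abs]
  exact bessel_term_abs n q x

lemma pow_le_exp_mul_factorial (k : ℕ) : (k:ℝ)^k ≤ Real.exp k * k.factorial := by
  induction k with
  | zero => simp
  | succ k ih =>
    have key : ((k:ℝ)+1)^k ≤ Real.exp 1 * (k:ℝ)^k := by
      rcases Nat.eq_zero_or_pos k with hk | hk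
      · subst hk; simpa using Real.one_le_exp zero_le_one
      · have hkpos : (0:ℝ) < k := by exact_mod_cast hk
        have h1 : ((k:ℝ)+1)^k = (k:ℝ)^k * (1 + 1/k)^k := by
          rw [← mul_pow]; congr 1; field_simp
        rw [h1]
        have h2 : (1 + 1/(k:ℝ))^k ≤ Real.exp 1 := by
          have h3 : (1 + 1/(k:ℝ)) ≤ Real.exp (1/k) := by
            have := Real.add_one_le_exp (1/(k:ℝ)); linarith
          calc (1 + 1/(k:ℝ))^k ≤ (Real.exp (1/k))^k := by
                apply pow_le_pow_left₀ (by positivity) h3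
            _ = Real.exp ((k:ℝ) * (1/k)) := (Real.exp_nat_mul _ k).symm
            _ = Real.exp 1 := by rw [mul_one_div, div_self (ne_of_gt hkpos)]
        nlinarith [pow_nonneg (le_of_lt hkpos) k, Real.exp_pos 1]
    push_cast
    calc ((k:ℝ)+1)^(k+1) = ((k:ℝ)+1) * ((k:ℝ)+1)^k := by ring
      _ ≤ ((k:ℝ)+1) * (Real.exp 1 * (k:ℝ)^k) := by
          apply mul_le_mul_of_nonneg_left key (by positivity)
      _ ≤ ((k:ℝ)+1) * (Real.exp 1 * (Real.exp k * k.factorial)) := by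
          gcongr
      _ = Real.exp ((k:ℝ)+1) * (((k:ℝ)+1) * k.factorial) := by rw [Real.exp_add]; ring
      _ = Real.exp ((k:ℝ)+1) * ((k+1).factorial : ℕ) := by
          rw [Nat.factorial_succ]; push_cast; ring

lemma pow_div_factorial_le (k : ℕ) (hk : 0 < k) (y : ℝ) (hy : 0 < y) :
    y^k / k.factorial ≤ Real.exp (Real.exp 1 * y - k) := by
  set t := Real.exp 1 * y / k with ht_def
  have hkpos : (0:ℝ) < k := by exact_mod_cast hk
  have hepos := Real.exp_pos 1
  have ht : 0 < t := by positivity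
  have hlog : Real.log t ≤ t - 1 := Real.log_le_sub_one_of_pos ht
  have hfac : (0:ℝ) < k.factorial := Nat.cast_pos.mpr k.factorial_pos
  have h1 : y^k = t^k * ((k:ℝ)^k / (Real.exp 1)^k) := by
    have hk0 : ((k:ℝ))^k ≠ 0 := by positivity
    have he0 : (Real.exp 1)^k ≠ 0 := by positivity
    rw [ht_def, div_pow]
    field_simp
    rw [mul_pow, ← Real.exp_nat_mul, mul_one]
    ring
  have h2 : t^k = Real.exp ((k:ℝ) * Real.log t) := by
    rw [Real.exp_nat_mul, Real.exp_log ht]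
  have h3 : (k:ℝ) * Real.log t ≤ Real.exp 1 * y - k := by
    have : (k:ℝ) * t = Real.exp 1 * y := by rw [ht_def]; field_simp
    nlinarith
  have h4 : (k:ℝ)^k / (Real.exp 1)^k ≤ k.factorial := by
    rw [div_le_iff₀ (by positivity)]
    calc (k:ℝ)^k ≤ Real.exp k * k.factorial := pow_le_exp_mul_factorial k
      _ = (k.factorial : ℝ) * (Real.exp 1)^k := by
          rw [← Real.exp_nat_mul, mul_one, mul_comm]
  calc y^k / k.factorial = t^k * ((k:ℝ)^k / (Real.exp 1)^k) / k.factorial := by rw [h1]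
    _ ≤ t^k * (k.factorial : ℝ) / k.factorial := by
        gcongr
    _ = t^k := mul_div_cancel_right₀ _ (ne_of_gt hfac)
    _ = Real.exp ((k:ℝ) * Real.log t) := h2
    _ ≤ Real.exp (Real.exp 1 * y - k) := Real.exp_le_exp.mpr h3

lemma wallis_prod (q : ℕ) :
    ∏ i ∈ Finset.range q, (2*(i:ℝ)+1)/(2*i+2)
      = ((2*q).factorial : ℝ) / (4^q * ((q.factorial : ℝ))^2) := by
  induction q with
  | zero => simp
  | succ k ih =>
    rw [Finset.prod_range_succ, ih]
    have h1 : (2*(k+1)) = (2*k+1) + 1 := by ring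
    rw [h1, Nat.factorial_succ, Nat.factorial_succ, Nat.factorial_succ]
    push_cast
    have h2 : ((2*k).factorial : ℝ) ≠ 0 := Nat.cast_ne_zero.mpr (Nat.factorial_ne_zero _)
    have h3 : ((k.factorial : ℝ)) ≠ 0 := Nat.cast_ne_zero.mpr (Nat.factorial_ne_zero _)
    field_simp
    ring

lemma integral_sin_pow_even_Ioc (q : ℕ) :
    ∫ θ in Set.Ioc (0:ℝ) π, (Real.sin θ)^(2*q)
      = π * (((2*q).factorial : ℝ) / (4^q * ((q.factorial : ℝ))^2)) := by
  rw [← wallis_prod, ← integral_sin_pow_even]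
  rw [intervalIntegral.integral_of_le Real.pi_pos.le]

lemma besselJNat_zero_eq (x : ℝ) :
    π * besselJNat 0 x = ∫ θ in Set.Ioc (0:ℝ) π, Real.cos (x * Real.sin θ) := by
  set F : ℕ → ℝ → ℝ :=
    fun q θ => (-1:ℝ)^q * (x * Real.sin θ)^(2*q) / ((2*q).factorial : ℝ) with hF
  have hF_int : ∀ q : ℕ, Integrable (F q) (volume.restrict (Set.Ioc 0 π)) := by
    intro q
    apply Continuous.integrableOn_Ioc
    fun_prop
  have hF_bd : ∀ q : ℕ, ∀ θ ∈ Set.Ioc (0:ℝ) π, ‖‖F q θ‖‖ ≤ (x^2)^q / (q.factorial : ℝ) := by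
    intro q θ _
    rw [norm_norm, hF]
    have h1 : ‖(-1:ℝ)^q * (x * Real.sin θ)^(2*q) / ((2*q).factorial : ℝ)‖
        = |x * Real.sin θ|^(2*q) / ((2*q).factorial : ℝ) := by
      rw [Real.norm_eq_abs, abs_div, abs_mul, abs_pow, abs_pow, abs_neg, abs_one, one_pow,
        one_mul, Nat.abs_cast]
    rw [h1]
    have h2 : |x * Real.sin θ|^(2*q) ≤ (x^2)^q := by
      rw [← sq_abs x, ← pow_mul]
      apply pow_le_pow_left₀ (abs_nonneg _)
      rw [abs_mul]
      calc |x| * |Real.sin θ| ≤ |x| * 1 :=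
            mul_le_mul_of_nonneg_left (Real.abs_sin_le_one θ) (abs_nonneg _)
        _ = |x| := mul_one _
    calc |x * Real.sin θ|^(2*q) / ((2*q).factorial : ℝ)
        ≤ (x^2)^q / ((2*q).factorial : ℝ) := by gcongr
      _ ≤ (x^2)^q / (q.factorial : ℝ) := by
          have hle : (q.factorial : ℝ) ≤ ((2*q).factorial : ℝ) := by
            exact_mod_cast Nat.factorial_le (by omega : q ≤ 2*q)
          gcongr
  have hF_sum : Summable fun q : ℕ => ∫ θ in Set.Ioc (0:ℝ) π, ‖F q θ‖ := by
    apply Summable.of_nonneg_of_le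
      (fun q => integral_nonneg (fun θ => norm_nonneg _))
      (fun q => ?_)
      (((Real.summable_pow_div_factorial (x^2)).mul_left π))
    calc (∫ θ in Set.Ioc (0:ℝ) π, ‖F q θ‖)
        ≤ ‖∫ θ in Set.Ioc (0:ℝ) π, ‖F q θ‖‖ := le_abs_self _
      _ ≤ ((x^2)^q / (q.factorial : ℝ)) * (volume (Set.Ioc (0:ℝ) π)).toReal :=
          norm_setIntegral_le_of_norm_le_const (by simp [Real.volume_Ioc])
            (hF_bd q)
      _ = π * ((x^2)^q / (q.factorial : ℝ)) := by
          rw [Real.volume_Ioc, sub_zero, ENNReal.toReal_ofReal Real.pi_pos.le, mul_comm]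
  have hswap := MeasureTheory.integral_tsum_of_summable_integral_norm hF_int hF_sum
  have hcos : ∀ θ : ℝ, (∑' q : ℕ, F q θ) = Real.cos (x * Real.sin θ) := fun θ =>
    (Real.cos_eq_tsum (x * Real.sin θ)).symm
  have hval : ∀ q : ℕ, (∫ θ in Set.Ioc (0:ℝ) π, F q θ)
      = π * ((-1:ℝ)^q * (x/2)^(2*q+0) / ((q.factorial : ℝ) * ((q+0).factorial : ℝ))) := by
    intro q
    have : (fun θ => F q θ)
        = fun θ => ((-1:ℝ)^q * x^(2*q) / ((2*q).factorial : ℝ)) * (Real.sin θ)^(2*q) := by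
      funext θ
      simp only [hF, mul_pow]
      ring
    rw [this, MeasureTheory.integral_const_mul, integral_sin_pow_even_Ioc]
    have h2 : ((2*q).factorial : ℝ) ≠ 0 := Nat.cast_ne_zero.mpr (Nat.factorial_ne_zero _)
    have h3 : ((q.factorial : ℝ)) ≠ 0 := Nat.cast_ne_zero.mpr (Nat.factorial_ne_zero _)
    have h4 : (x/2)^(2*q) = x^(2*q) / 4^q := by
      rw [div_pow]
      congr 1
      rw [show (4:ℝ) = 2^2 by norm_num, ← pow_mul, mul_comm]
    simp only [add_zero, Nat.add_zero, h4]
    field_simp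
  calc π * besselJNat 0 x
      = ∑' q : ℕ, π * ((-1:ℝ)^q * (x/2)^(2*q+0) / ((q.factorial : ℝ) * ((q+0).factorial : ℝ))) := by
        rw [besselJNat, tsum_mul_left]
    _ = ∑' q : ℕ, ∫ θ in Set.Ioc (0:ℝ) π, F q θ := (tsum_congr hval).symm
    _ = ∫ θ in Set.Ioc (0:ℝ) π, ∑' q : ℕ, F q θ := hswap
    _ = ∫ θ in Set.Ioc (0:ℝ) π, Real.cos (x * Real.sin θ) := by simp only [hcos]

lemma abs_besselJNat_zero_le (x : ℝ) : |besselJNat 0 x| ≤ 1 := by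
  have h := besselJNat_zero_eq x
  have hb : ‖∫ θ in Set.Ioc (0:ℝ) π, Real.cos (x * Real.sin θ)‖
      ≤ 1 * (volume (Set.Ioc (0:ℝ) π)).toReal :=
    norm_setIntegral_le_of_norm_le_const (by simp [Real.volume_Ioc])
      (fun θ _ => by rw [Real.norm_eq_abs]; exact Real.abs_cos_le_one _)
  rw [Real.volume_Ioc, sub_zero, ENNReal.toReal_ofReal Real.pi_pos.le, one_mul] at hb
  rw [← h, Real.norm_eq_abs, abs_mul, abs_of_pos Real.pi_pos] at hb
  nlinarith [Real.pi_pos, abs_nonneg (besselJNat 0 x)]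

lemma besselJNat_succ_eq (n : ℕ) (x : ℝ) (hx : 0 ≤ x) :
    x^(n+1) * besselJNat (n+1) x = ∫ t in Set.Ioc (0:ℝ) x, t^(n+1) * besselJNat n t := by
  set F : ℕ → ℝ → ℝ := fun q t =>
    (-1:ℝ)^q * (t^(n+1) * (t/2)^(2*q+n)) / ((q.factorial : ℝ) * ((q+n).factorial : ℝ)) with hF
  have hFt : ∀ (q : ℕ) (t : ℝ), F q t =
      ((-1:ℝ)^q / (2^(2*q+n) * ((q.factorial : ℝ) * ((q+n).factorial : ℝ)))) * t^(2*q+2*n+1) := by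
    intro q t
    have h1 : t^(n+1) * (t/2)^(2*q+n) = t^(2*q+2*n+1) / 2^(2*q+n) := by
      rw [div_pow, ← mul_div_assoc, ← pow_add]
      congr 2
      omega
    simp only [hF, h1]
    ring
  have hF_int : ∀ q : ℕ, Integrable (F q) (volume.restrict (Set.Ioc 0 x)) := by
    intro q
    apply Continuous.integrableOn_Ioc
    have : Continuous fun t : ℝ =>
        ((-1:ℝ)^q / (2^(2*q+n) * ((q.factorial : ℝ) * ((q+n).factorial : ℝ)))) * t^(2*q+2*n+1) := by
      fun_prop
    simpa only [← hFt] using this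
  have hF_bd : ∀ q : ℕ, ∀ t ∈ Set.Ioc (0:ℝ) x,
      ‖‖F q t‖‖ ≤ x^(2*n+1) * ((x^2)^q / (q.factorial : ℝ)) := by
    intro q t ht
    have h0 : 0 < t := ht.1
    have hfq : (0:ℝ) < q.factorial := Nat.cast_pos.mpr q.factorial_pos
    have hfqn : (1:ℝ) ≤ ((q+n).factorial : ℝ) := by
      exact_mod_cast Nat.one_le_iff_ne_zero.mpr (Nat.factorial_ne_zero _)
    have h2 : (1:ℝ) ≤ 2^(2*q+n) := one_le_pow₀ (by norm_num)
    rw [norm_norm, hFt q t, norm_mul, norm_pow, Real.norm_eq_abs, Real.norm_eq_abs]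
    have habs : |(-1:ℝ)^q / (2^(2*q+n) * ((q.factorial : ℝ) * ((q+n).factorial : ℝ)))|
        = 1 / (2^(2*q+n) * ((q.factorial : ℝ) * ((q+n).factorial : ℝ))) := by
      rw [abs_div, abs_pow, abs_neg, abs_one, one_pow, abs_of_pos (by positivity)]
    rw [habs, abs_of_pos h0]
    calc 1 / (2^(2*q+n) * ((q.factorial : ℝ) * ((q+n).factorial : ℝ))) * t^(2*q+2*n+1)
        ≤ 1 / (q.factorial : ℝ) * x^(2*q+2*n+1) := by
          apply mul_le_mul
          · apply one_div_le_one_div_of_le hfq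
            calc (q.factorial : ℝ) ≤ (q.factorial : ℝ) * ((q+n).factorial : ℝ) :=
                  le_mul_of_one_le_right hfq.le hfqn
              _ ≤ 2^(2*q+n) * ((q.factorial : ℝ) * ((q+n).factorial : ℝ)) :=
                  le_mul_of_one_le_left (by positivity) h2
          · exact pow_le_pow_left₀ h0.le ht.2 _
          · positivity
          · positivity
      _ = x^(2*n+1) * ((x^2)^q / (q.factorial : ℝ)) := by
          rw [← pow_mul]
          rw [show 2*q+2*n+1 = q*2 + (2*n+1) by omega, pow_add]
          ring
  have hF_sum : Summable fun q : ℕ => ∫ t in Set.Ioc (0:ℝ) x, ‖F q t‖ := by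
    apply Summable.of_nonneg_of_le
      (fun q => integral_nonneg (fun t => norm_nonneg _))
      (fun q => ?_)
      ((((Real.summable_pow_div_factorial (x^2)).mul_left (x^(2*n+1)))).mul_right x)
    calc (∫ t in Set.Ioc (0:ℝ) x, ‖F q t‖)
        ≤ ‖∫ t in Set.Ioc (0:ℝ) x, ‖F q t‖‖ := le_abs_self _
      _ ≤ (x^(2*n+1) * ((x^2)^q / (q.factorial : ℝ))) * (volume (Set.Ioc (0:ℝ) x)).toReal :=
          norm_setIntegral_le_of_norm_le_const (by simp [Real.volume_Ioc])
            (hF_bd q)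
      _ = x^(2*n+1) * ((x^2)^q / (q.factorial : ℝ)) * x := by
          rw [Real.volume_Ioc, sub_zero, ENNReal.toReal_ofReal hx]
  have hswap := MeasureTheory.integral_tsum_of_summable_integral_norm hF_int hF_sum
  have hval : ∀ q : ℕ, (∫ t in Set.Ioc (0:ℝ) x, F q t)
      = x^(n+1) * ((-1:ℝ)^q * (x/2)^(2*q+(n+1)) / ((q.factorial : ℝ) * ((q+(n+1)).factorial : ℝ))) := by
    intro q
    rw [show (fun t => F q t) = (fun t =>
        ((-1:ℝ)^q / (2^(2*q+n) * ((q.factorial : ℝ) * ((q+n).factorial : ℝ)))) * t^(2*q+2*n+1))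
      from funext (hFt q)]
    rw [MeasureTheory.integral_const_mul, ← intervalIntegral.integral_of_le hx, integral_pow,
      zero_pow (by omega : 2*q+2*n+1+1 ≠ 0), sub_zero]
    have hq : ((q.factorial : ℝ)) ≠ 0 := Nat.cast_ne_zero.mpr (Nat.factorial_ne_zero _)
    have hqn : ((q+n).factorial : ℝ) ≠ 0 := Nat.cast_ne_zero.mpr (Nat.factorial_ne_zero _)
    have hsucc : (q+(n+1)).factorial = (q+n+1) * (q+n).factorial := by
      rw [show q+(n+1) = (q+n)+1 by omega, Nat.factorial_succ]
    have hxp : (x/2)^(2*q+(n+1)) = x^(2*q+n+1) / 2^(2*q+n+1) := by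
      rw [div_pow]
      congr 1 <;> congr 1 <;> omega
    rw [hsucc, hxp]
    have hexp1 : x^(2*q+2*n+1+1) = x^(n+1) * x^(2*q+n+1) := by
      rw [← pow_add]
      congr 1
      omega
    have hexp2 : (2:ℝ)^(2*q+n+1) = 2^(2*q+n) * 2 := by rw [pow_succ]
    push_cast
    rw [hexp1, hexp2]
    have h2ne : (2:ℝ)^(2*q+n) ≠ 0 := by positivity
    field_simp
    ring
  have hpt : ∀ t : ℝ, t^(n+1) * besselJNat n t = ∑' q : ℕ, F q t := by
    intro t
    rw [besselJNat, ← tsum_mul_left]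
    exact tsum_congr fun q => by simp only [hF]; ring
  calc x^(n+1) * besselJNat (n+1) x
      = ∑' q : ℕ, x^(n+1) * ((-1:ℝ)^q * (x/2)^(2*q+(n+1)) /
          ((q.factorial : ℝ) * ((q+(n+1)).factorial : ℝ))) := by
        rw [besselJNat, tsum_mul_left]
    _ = ∑' q : ℕ, ∫ t in Set.Ioc (0:ℝ) x, F q t := (tsum_congr hval).symm
    _ = ∫ t in Set.Ioc (0:ℝ) x, ∑' q : ℕ, F q t := hswap
    _ = ∫ t in Set.Ioc (0:ℝ) x, t^(n+1) * besselJNat n t := by simp only [← hpt]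

lemma abs_besselJNat_le (n : ℕ) : ∀ x : ℝ, 0 ≤ x → |besselJNat n x| ≤ (x/2)^n / n.factorial := by
  induction n with
  | zero => intro x hx; simpa using abs_besselJNat_zero_le x
  | succ n ih =>
    intro x hx
    rcases eq_or_lt_of_le hx with heq | hpos
    · have hz : besselJNat (n+1) 0 = 0 := by
        rw [besselJNat]
        convert tsum_zero with q
        rw [zero_div, zero_pow (by omega : 2*q+(n+1) ≠ 0)]
        simp
      rw [← heq, hz]
      simp [zero_pow (by omega : n+1 ≠ 0)]
    · have hrec := besselJNat_succ_eq n x hx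
      have hbd : ‖∫ t in Set.Ioc (0:ℝ) x, t^(n+1) * besselJNat n t‖
          ≤ ∫ t in Set.Ioc (0:ℝ) x, t^(2*n+1) / (2^n * (n.factorial : ℝ)) := by
        apply MeasureTheory.norm_integral_le_of_norm_le
        · apply Continuous.integrableOn_Ioc
          fun_prop
        · filter_upwards [ae_restrict_mem measurableSet_Ioc] with t ht
          have h0 : 0 < t := ht.1
          have hb := ih t h0.le
          rw [Real.norm_eq_abs, abs_mul, abs_of_pos (pow_pos h0 _)]
          calc t^(n+1) * |besselJNat n t|
              ≤ t^(n+1) * ((t/2)^n / (n.factorial : ℝ)) := by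
                apply mul_le_mul_of_nonneg_left hb (by positivity)
            _ = t^(2*n+1) / (2^n * (n.factorial : ℝ)) := by
                rw [div_pow, div_div]
                rw [show t^(2*n+1) = t^(n+1) * t^n by rw [← pow_add]; congr 1; omega]
                ring
      have hI : (∫ t in Set.Ioc (0:ℝ) x, t^(2*n+1) / (2^n * (n.factorial : ℝ)))
          = x^(n+1) * ((x/2)^(n+1) / ((n+1).factorial : ℝ)) := by
        rw [← intervalIntegral.integral_of_le hx, intervalIntegral.integral_div, integral_pow,
          zero_pow (by omega : 2*n+1+1 ≠ 0), sub_zero]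
        have hq : ((n.factorial : ℝ)) ≠ 0 := Nat.cast_ne_zero.mpr (Nat.factorial_ne_zero _)
        rw [Nat.factorial_succ, div_pow]
        rw [show x^(2*n+1+1) = x^(n+1) * x^(n+1) by rw [← pow_add]; congr 1; omega,
          show (2:ℝ)^(n+1) = 2^n * 2 by rw [pow_succ]]
        push_cast
        field_simp
        ring
      have hxp : (0:ℝ) < x^(n+1) := pow_pos hpos _
      have hkey : x^(n+1) * |besselJNat (n+1) x| ≤ x^(n+1) * ((x/2)^(n+1) / ((n+1).factorial : ℝ)) := by
        rw [show x^(n+1) * |besselJNat (n+1) x| = |x^(n+1) * besselJNat (n+1) x| by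
          rw [abs_mul, abs_of_pos hxp]]
        rw [hrec, ← Real.norm_eq_abs, ← hI]
        exact hbd
      exact le_of_mul_le_mul_left hkey hxp

theorem stmt1 (k : ℕ) (hk : 0 < k) (x : ℝ) (hx : 0 < x) :
    |besselJ k x| ≤ Real.exp (Real.exp 1 * x / 2 - k) := by
  have h0 : besselJ (k : ℤ) x = besselJNat k x := by
    rw [besselJ, if_pos (Int.natCast_nonneg k), Int.toNat_natCast]
  rw [h0]
  calc |besselJNat k x| ≤ (x/2)^k / k.factorial := abs_besselJNat_le k x hx.le
    _ ≤ Real.exp (Real.exp 1 * (x/2) - k) := pow_div_factorial_le k hk (x/2) (by positivity)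
    _ = Real.exp (Real.exp 1 * x / 2 - k) := by rw [mul_div_assoc]
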